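/- Let k be a field of characteristic zero, V a k-vector space, and α : V ⊗ V → V a k-linear map satisfying α(a ⊗ b) = −α(b ⊗ a) for all a, b ∈ V. Then α satisfies the Jacobi identity, i.e. α(α(a ⊗ b) ⊗ c) + α(α(b ⊗ c) ⊗ a) + α(α(c ⊗ a) ⊗ b) = 0 for all a, b, c ∈ V, if and only if there exists a k-linear map β : V ⊗ V ⊗ V → V such that for all a, b, c ∈ V one has β(a⊗b⊗c − b⊗a⊗c) = 2·α(α(a⊗b)⊗c) and β(a⊗b⊗c − a⊗c⊗b) = 2·α(a⊗α(b⊗c)). -/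

import Mathlib

open scoped TensorProduct

/-- Let `k` be a field of characteristic zero, `V` a `k`-vector space, and
`α : V ⊗ V → V` a `k`-linear map satisfying `α(a ⊗ b) = −α(b ⊗ a)`.  Then `α` satisfies the
Jacobi identity if and only if there exists a `k`-linear map `β : V ⊗ V ⊗ V → V` such that
`β(a⊗b⊗c − b⊗a⊗c) = 2·α(α(a⊗b)⊗c)` and `β(a⊗b⊗c − a⊗c⊗b) = 2·α(a⊗α(b⊗c))` for all
`a, b, c ∈ V`. -/
theorem stmt_4 (k : Type*) [Field k] [CharZero k] (V : Type*) [AddCommGroup V] [Module k V]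
    (α : V ⊗[k] V →ₗ[k] V) (hα : ∀ a b : V, α (a ⊗ₜ[k] b) = -α (b ⊗ₜ[k] a)) :
    (∀ a b c : V,
        α (α (a ⊗ₜ[k] b) ⊗ₜ[k] c) + α (α (b ⊗ₜ[k] c) ⊗ₜ[k] a)
          + α (α (c ⊗ₜ[k] a) ⊗ₜ[k] b) = 0) ↔
      ∃ β : V ⊗[k] (V ⊗[k] V) →ₗ[k] V,
        (∀ a b c : V,
          β (a ⊗ₜ[k] (b ⊗ₜ[k] c) - b ⊗ₜ[k] (a ⊗ₜ[k] c)) =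
            (2 : k) • α (α (a ⊗ₜ[k] b) ⊗ₜ[k] c)) ∧
        (∀ a b c : V,
          β (a ⊗ₜ[k] (b ⊗ₜ[k] c) - a ⊗ₜ[k] (c ⊗ₜ[k] b)) =
            (2 : k) • α (a ⊗ₜ[k] α (b ⊗ₜ[k] c))) := by
  have hneg : ∀ (x y : V), α ((-x) ⊗ₜ[k] y) = -α (x ⊗ₜ[k] y) := by
    intro x y; rw [TensorProduct.neg_tmul, map_neg]
  constructor
  · intro hJ
    set β₀ : V ⊗[k] (V ⊗[k] V) →ₗ[k] V :=
      α.comp ((TensorProduct.map α LinearMap.id).comp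
        (TensorProduct.assoc k V V V).symm.toLinearMap)
      + α.comp (TensorProduct.map LinearMap.id α) with hβ₀
    have hβ₀tmul : ∀ a b c : V,
        β₀ (a ⊗ₜ[k] (b ⊗ₜ[k] c)) = α (α (a ⊗ₜ[k] b) ⊗ₜ[k] c) + α (a ⊗ₜ[k] α (b ⊗ₜ[k] c)) := by
      intro a b c
      simp [hβ₀, TensorProduct.map_tmul]
    refine ⟨((2:k)/3) • β₀, ?_, ?_⟩
    · intro a b c
      have t2eq : α (α (b ⊗ₜ[k] c) ⊗ₜ[k] a)
          = -α (α (a ⊗ₜ[k] b) ⊗ₜ[k] c) - α (α (c ⊗ₜ[k] a) ⊗ₜ[k] b) := by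
        have := hJ a b c; linear_combination (norm := module) this
      have e1 : α (α (b ⊗ₜ[k] a) ⊗ₜ[k] c) = -α (α (a ⊗ₜ[k] b) ⊗ₜ[k] c) := by
        rw [hα b a, hneg]
      have e2 : α (a ⊗ₜ[k] α (b ⊗ₜ[k] c)) = -α (α (b ⊗ₜ[k] c) ⊗ₜ[k] a) := hα _ _
      have e3 : α (b ⊗ₜ[k] α (a ⊗ₜ[k] c)) = α (α (c ⊗ₜ[k] a) ⊗ₜ[k] b) := by
        rw [hα b (α (a ⊗ₜ[k] c)), hα a c, hneg, neg_neg]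
      rw [LinearMap.smul_apply, map_sub, hβ₀tmul, hβ₀tmul, e1, e2, e3, t2eq]
      module
    · intro a b c
      have t2eq : α (α (b ⊗ₜ[k] c) ⊗ₜ[k] a)
          = -α (α (a ⊗ₜ[k] b) ⊗ₜ[k] c) - α (α (c ⊗ₜ[k] a) ⊗ₜ[k] b) := by
        have := hJ a b c; linear_combination (norm := module) this
      have e2 : α (a ⊗ₜ[k] α (b ⊗ₜ[k] c)) = -α (α (b ⊗ₜ[k] c) ⊗ₜ[k] a) := hα _ _
      have e4 : α (α (a ⊗ₜ[k] c) ⊗ₜ[k] b) = -α (α (c ⊗ₜ[k] a) ⊗ₜ[k] b) := by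
        rw [hα a c, hneg]
      have e5 : α (a ⊗ₜ[k] α (c ⊗ₜ[k] b)) = α (α (b ⊗ₜ[k] c) ⊗ₜ[k] a) := by
        rw [hα c b, TensorProduct.tmul_neg, map_neg, hα a (α (b ⊗ₜ[k] c)), neg_neg]
      rw [LinearMap.smul_apply, map_sub, hβ₀tmul, hβ₀tmul, e2, e4, e5, t2eq]
      module
  · rintro ⟨β, h1, h2⟩ a b c
    set t1 := α (α (a ⊗ₜ[k] b) ⊗ₜ[k] c) with ht1
    set t2 := α (α (b ⊗ₜ[k] c) ⊗ₜ[k] a) with ht2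
    set t3 := α (α (c ⊗ₜ[k] a) ⊗ₜ[k] b) with ht3
    have hA := h1 a b c
    have hB := h1 b c a
    have hC := h1 c a b
    have hD := h2 a b c
    have hE := h2 b c a
    have hF := h2 c a b
    have hD' : β (a ⊗ₜ[k] (b ⊗ₜ[k] c) - a ⊗ₜ[k] (c ⊗ₜ[k] b)) = (2:k) • (-t2) := by
      rw [hD, hα a (α (b ⊗ₜ[k] c))]
    have hE' : β (b ⊗ₜ[k] (c ⊗ₜ[k] a) - b ⊗ₜ[k] (a ⊗ₜ[k] c)) = (2:k) • (-t3) := by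
      rw [hE, hα b (α (c ⊗ₜ[k] a))]
    have hF' : β (c ⊗ₜ[k] (a ⊗ₜ[k] b) - c ⊗ₜ[k] (b ⊗ₜ[k] a)) = (2:k) • (-t1) := by
      rw [hF, hα c (α (a ⊗ₜ[k] b))]
    set S := (a ⊗ₜ[k] (b ⊗ₜ[k] c) - b ⊗ₜ[k] (a ⊗ₜ[k] c))
      + (b ⊗ₜ[k] (c ⊗ₜ[k] a) - c ⊗ₜ[k] (b ⊗ₜ[k] a))
      + (c ⊗ₜ[k] (a ⊗ₜ[k] b) - a ⊗ₜ[k] (c ⊗ₜ[k] b)) with hS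
    have sum1 : β S = (2:k) • t1 + (2:k) • t2 + (2:k) • t3 := by
      rw [hS, map_add, map_add, hA, hB, hC]
    have sum2 : β S = (2:k) • (-t2) + (2:k) • (-t3) + (2:k) • (-t1) := by
      have hS2 : S = (a ⊗ₜ[k] (b ⊗ₜ[k] c) - a ⊗ₜ[k] (c ⊗ₜ[k] b))
          + (b ⊗ₜ[k] (c ⊗ₜ[k] a) - b ⊗ₜ[k] (a ⊗ₜ[k] c))
          + (c ⊗ₜ[k] (a ⊗ₜ[k] b) - c ⊗ₜ[k] (b ⊗ₜ[k] a)) := by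
        rw [hS]; abel
      rw [hS2, map_add, map_add, hD', hE', hF']
    have h4 : (4:k) • (t1 + t2 + t3) = 0 := by
      have heq := sum1.symm.trans sum2
      linear_combination (norm := module) heq
    have := smul_eq_zero (r := (4:k)) (m := t1 + t2 + t3) |>.mp h4
    rcases this with h | h
    · exact absurd h (by norm_num)
    · exact h
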